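/- Assume p ≡ 3 (mod 4). For any even integer l with 0 ≤ l < p, we have g̃_l(n) ≤ p - n for all 1 ≤ n ≤ p; in particular g̃_l(p) = 0, and hence g_{(p-1)/2, l}(p) ∈ Z_(p). -/

import Mathlib

/-- The (k,l)-Göbel sequence with values in ℚ: g 1 = l and
    (n+1) * g (n+1) = g n * (n + g n ^ (k-1)). -/
def gobel (k : ℕ) (l : ℚ) : ℕ → ℚ
  | 0 => 0
  | 1 => l
  | (n+2) => gobel k l (n+1) * (((n:ℚ)+1) + (gobel k l (n+1)) ^ (k-1)) / ((n:ℚ)+2)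

/-- The auxiliary sequence g̃_l of Kobayashi–Seki. -/
def gtilde (p : ℕ) [Fact p.Prime] (l : ℕ) : ℕ → ℤ
  | 0 => (l : ℤ)
  | 1 => (l : ℤ)
  | (n+2) =>
    let g := gtilde p l (n+1)
    if 0 < g ∧ g < (p : ℤ) then g + legendreSym p ((n:ℤ)+1) * legendreSym p g else g

/-- A rational number belongs to the localization ℤ_(p). -/
def inZp (p : ℕ) (x : ℚ) : Prop := ¬ (p ∣ x.den)

/-- Congruence modulo p inside ℤ_(p). -/
def modCongZp (p : ℕ) (x y : ℚ) : Prop :=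
  ∃ z : ℚ, ¬ (p ∣ z.den) ∧ x - y = (p : ℚ) * z

/-! ### Auxiliary lemmas -/

lemma KS.gtilde_succ (p l : ℕ) [Fact p.Prime] (n : ℕ) (hn : 1 ≤ n) :
    gtilde p l (n+1) = if 0 < gtilde p l n ∧ gtilde p l n < (p:ℤ) then
      gtilde p l n + legendreSym p (n:ℤ) * legendreSym p (gtilde p l n) else gtilde p l n := by
  obtain ⟨m, rfl⟩ : ∃ m, n = m + 1 := ⟨n - 1, by omega⟩
  show gtilde p l (m+2) = _
  rw [gtilde]
  push_cast
  rfl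

lemma KS.leg_congr (p : ℕ) [Fact p.Prime] (a b : ℤ) (h : (a : ZMod p) = b) :
    legendreSym p a = legendreSym p b := by
  unfold legendreSym; rw [h]

lemma KS.zmod_ne_zero (p : ℕ) [Fact p.Prime] {a : ℤ} (h0 : 0 < a) (h1 : a < p) :
    ((a : ZMod p) ≠ 0) := by
  intro hd
  rw [ZMod.intCast_zmod_eq_zero_iff_dvd] at hd
  have := Int.le_of_dvd h0 hd
  omega

lemma KS.leg_step (p : ℕ) [Fact p.Prime] (hp4 : p % 4 = 3) (n : ℤ)
    (hn : ¬ ((n : ZMod p) = 0)) :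
    legendreSym p n * legendreSym p ((p:ℤ) - n) = -1 := by
  have hp2 : p ≠ 2 := by omega
  have h1 : legendreSym p ((p:ℤ) - n) = legendreSym p (-1 * n) := by
    apply KS.leg_congr
    push_cast [ZMod.natCast_self]
    ring
  rw [h1, legendreSym.mul, legendreSym.at_neg_one hp2, ZMod.χ₄_nat_three_mod_four hp4]
  have := legendreSym.sq_one p hn
  nlinarith [this]

/-- The main invariant for the auxiliary sequence. -/
lemma KS.gtilde_inv (p : ℕ) [Fact p.Prime] (hp4 : p % 4 = 3) (l : ℕ) (hleven : Even l)
    (hl : l < p) :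
    ∀ n : ℕ, 1 ≤ n → n ≤ p →
      gtilde p l n = 0 ∨
        (0 < gtilde p l n ∧ gtilde p l n ≤ (p:ℤ) - n ∧ (gtilde p l n + n) % 2 = 1) := by
  have hpodd : p % 2 = 1 := by omega
  intro n
  induction n with
  | zero => intro h; omega
  | succ n ih =>
    intro _ h2
    by_cases hn0 : n = 0
    · subst hn0
      simp only [Nat.zero_add]
      have h1 : gtilde p l 1 = (l:ℤ) := rfl
      rw [h1]
      obtain ⟨m, hm⟩ := hleven
      subst hm
      push_cast
      omega
    · have hn1 : 1 ≤ n := by omega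
      have IH := ih hn1 (by omega)
      rw [KS.gtilde_succ p l n hn1]
      rcases IH with h0 | ⟨hpos, hle, hpar⟩
      · left; rw [h0]; simp
      · have hcond : 0 < gtilde p l n ∧ gtilde p l n < (p:ℤ) := ⟨hpos, by omega⟩
        rw [if_pos hcond]
        set a := gtilde p l n with ha
        have hnz : (((n:ℤ) : ZMod p) ≠ 0) := by
          apply KS.zmod_ne_zero p (by exact_mod_cast hn1)
          exact_mod_cast (by omega : (n:ℤ) < p)
        have haz : ((a : ZMod p) ≠ 0) := KS.zmod_ne_zero p hpos (by omega)
        set s := legendreSym p (n:ℤ) * legendreSym p a with hs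
        have hs1 : s = 1 ∨ s = -1 := by
          rcases legendreSym.eq_one_or_neg_one p hnz with h | h <;>
            rcases legendreSym.eq_one_or_neg_one p haz with h' | h' <;>
              rw [hs, h, h'] <;> norm_num
        by_cases hEq : a = (p:ℤ) - n
        · have hs2 : s = -1 := by
            rw [hs, hEq]; exact KS.leg_step p hp4 (n:ℤ) hnz
          rw [hs2]
          push_cast
          omega
        · push_cast
          omega

lemma KS.gtilde_le (p : ℕ) [Fact p.Prime] (hp4 : p % 4 = 3) (l : ℕ) (hleven : Even l)
    (hl : l < p) :
    ∀ n : ℕ, 1 ≤ n → n ≤ p → gtilde p l n ≤ (p : ℤ) - (n : ℤ) := by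
  intro n h1 h2
  rcases KS.gtilde_inv p hp4 l hleven hl n h1 h2 with h | h
  · rw [h]; push_cast; omega
  · exact h.2.1

lemma KS.gtilde_nonneg (p : ℕ) [Fact p.Prime] (hp4 : p % 4 = 3) (l : ℕ) (hleven : Even l)
    (hl : l < p) :
    ∀ n : ℕ, 1 ≤ n → n ≤ p → 0 ≤ gtilde p l n := by
  intro n h1 h2
  rcases KS.gtilde_inv p hp4 l hleven hl n h1 h2 with h | h
  · omega
  · omega

lemma KS.gtilde_p (p : ℕ) [Fact p.Prime] (hp4 : p % 4 = 3) (l : ℕ) (hleven : Even l)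
    (hl : l < p) : gtilde p l p = 0 := by
  have hp1 : 1 ≤ p := by omega
  rcases KS.gtilde_inv p hp4 l hleven hl p hp1 le_rfl with h | ⟨h1, h2, _⟩
  · exact h
  · omega
/-! ### p-adic congruence toolkit -/

namespace KS

variable {p : ℕ} [Fact p.Prime]

lemma cng_trans {x y z : ℚ_[p]} (h1 : ‖x - y‖ < 1) (h2 : ‖y - z‖ < 1) : ‖x - z‖ < 1 := by
  have e : x - z = (x - y) + (y - z) := by ring
  rw [e]
  exact lt_of_le_of_lt (Padic.nonarchimedean _ _) (max_lt h1 h2)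

lemma cng_mul {x x' y y' : ℚ_[p]} (hx' : ‖x'‖ ≤ 1) (hy : ‖y‖ ≤ 1)
    (h1 : ‖x - x'‖ < 1) (h2 : ‖y - y'‖ < 1) : ‖x * y - x' * y'‖ < 1 := by
  have e : x * y - x' * y' = (x - x') * y + x' * (y - y') := by ring
  rw [e]
  refine lt_of_le_of_lt (Padic.nonarchimedean _ _) (max_lt ?_ ?_)
  · calc ‖(x - x') * y‖ = ‖x - x'‖ * ‖y‖ := norm_mul _ _
      _ ≤ ‖x - x'‖ * 1 := mul_le_mul_of_nonneg_left hy (norm_nonneg _)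
      _ < 1 := by rwa [mul_one]
  · calc ‖x' * (y - y')‖ = ‖x'‖ * ‖y - y'‖ := norm_mul _ _
      _ ≤ 1 * ‖y - y'‖ := mul_le_mul_of_nonneg_right hx' (norm_nonneg _)
      _ < 1 := by rwa [one_mul]

lemma cng_pow {x y : ℚ_[p]} (hx : ‖x‖ ≤ 1) (hy : ‖y‖ ≤ 1) (h : ‖x - y‖ < 1) :
    ∀ k : ℕ, ‖x ^ k - y ^ k‖ < 1
  | 0 => by simp
  | (k+1) => by
    have hyk : ‖y ^ k‖ ≤ 1 := by rw [norm_pow]; exact pow_le_one₀ (norm_nonneg _) hy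
    have := cng_mul (x := x ^ k) (x' := y ^ k) (y := x) (y' := y) hyk hx
      (cng_pow hx hy h k) h
    rwa [← pow_succ, ← pow_succ] at this

lemma norm_int_eq_one {a : ℤ} (ha : ¬ (p:ℤ) ∣ a) : ‖(a : ℚ_[p])‖ = 1 := by
  refine le_antisymm (Padic.norm_int_le_one a) (not_lt.1 fun h => ha ?_)
  exact (Padic.norm_intCast_lt_one_iff (k := a)).1 h

lemma norm_natCast_eq_one {n : ℕ} (h0 : 0 < n) (h1 : n < p) : ‖(n : ℚ_[p])‖ = 1 := by
  have : ¬ (p:ℤ) ∣ (n:ℤ) := by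
    intro hd
    have := Int.le_of_dvd (by exact_mod_cast h0) hd
    omega
  have := norm_int_eq_one (p := p) this
  push_cast at this
  exact this

lemma euler_dvd (a : ℤ) : (p:ℤ) ∣ a ^ (p / 2) - legendreSym p a := by
  rw [← ZMod.intCast_zmod_eq_zero_iff_dvd]
  push_cast
  rw [legendreSym.eq_pow]
  ring

/-- The rational Göbel sequence, viewed inside `ℚ_[p]`. -/
noncomputable def Gq (p : ℕ) [Fact p.Prime] (k : ℕ) (l : ℚ) (n : ℕ) : ℚ_[p] :=
  ((gobel k l n : ℚ) : ℚ_[p])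

lemma Gq_rec (k : ℕ) (l : ℚ) (n : ℕ) (hn : 1 ≤ n) :
    ((n:ℚ_[p]) + 1) * Gq p k l (n+1) = Gq p k l n * ((n:ℚ_[p]) + Gq p k l n ^ (k-1)) := by
  obtain ⟨m, rfl⟩ : ∃ m, n = m + 1 := ⟨n - 1, by omega⟩
  have h0 : ((m:ℚ) + 2) ≠ 0 := by positivity
  have h : ((m:ℚ) + 2) * gobel k l (m+2)
      = gobel k l (m+1) * (((m:ℚ)+1) + gobel k l (m+1) ^ (k-1)) := by
    rw [gobel]
    field_simp
  have h2 := congrArg (fun q : ℚ => (q : ℚ_[p])) h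
  unfold Gq
  push_cast at h2 ⊢
  convert h2 using 2 <;> push_cast <;> ring

end KS
namespace KS

variable {p : ℕ} [Fact p.Prime]

/-- The core congruence step. -/
lemma gobel_step (hp4 : p % 4 = 3) (l : ℕ) (hleven : Even l) (hl : l < p)
    (n : ℕ) (h1 : 1 ≤ n) (h2 : n ≤ p - 1)
    (hA : ‖Gq p ((p-1)/2) (l:ℚ) n‖ ≤ 1)
    (hB : ‖(n : ℚ_[p]) * Gq p ((p-1)/2) (l:ℚ) n - ((gtilde p l n : ℤ) : ℚ_[p])‖ < 1) :
    ‖Gq p ((p-1)/2) (l:ℚ) n * ((n:ℚ_[p]) + Gq p ((p-1)/2) (l:ℚ) n ^ ((p-1)/2 - 1))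
      - ((gtilde p l (n+1) : ℤ) : ℚ_[p])‖ < 1 := by
  have hp3 : 3 ≤ p := by omega
  set k : ℕ := (p-1)/2 with hk
  have hk1 : 1 ≤ k := by omega
  have hkp : k = p / 2 := by omega
  set G : ℚ_[p] := Gq p k (l:ℚ) n with hG
  set N : ℚ_[p] := (n : ℚ_[p]) with hN
  have hNn : ‖N‖ = 1 := norm_natCast_eq_one h1 (by omega)
  have hN0 : N ≠ 0 := by
    intro h; rw [h] at hNn; simp at hNn
  have e1 : G * (N + G ^ (k-1)) = N * G + G ^ k := by
    rw [mul_add, ← pow_succ']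
    have : k - 1 + 1 = k := by omega
    rw [this, mul_comm G N]
  rw [e1]
  -- the value of gtilde at n
  set a : ℤ := gtilde p l n with ha
  have hbounds := gtilde_inv p hp4 l hleven hl n h1 (by omega)
  rw [← ha] at hbounds
  by_cases ha0 : a = 0
  · -- a = 0 : everything is small
    have hsucc : gtilde p l (n+1) = 0 := by
      rw [gtilde_succ p l n h1, ← ha, ha0]; simp
    rw [hsucc]
    have hNG : ‖N * G‖ < 1 := by
      have := hB; rw [ha0] at this; simpa using this
    have hGlt : ‖G‖ < 1 := by
      rwa [norm_mul, hNn, one_mul] at hNG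
    have hGk : ‖G ^ k‖ < 1 := by
      rw [norm_pow]
      exact pow_lt_one₀ (norm_nonneg _) hGlt (by omega)
    simpa using lt_of_le_of_lt (Padic.nonarchimedean (N * G) (G ^ k)) (max_lt hNG hGk)
  · -- a ≠ 0
    have hapos : 0 < a := by
      rcases hbounds with h | h
      · omega
      · omega
    have hale : a ≤ (p:ℤ) - n := by
      rcases hbounds with h | h
      · omega
      · exact h.2.1
    have haz : ((a : ZMod p) ≠ 0) := zmod_ne_zero p hapos (by omega)
    have hnz : (((n:ℤ) : ZMod p) ≠ 0) := by
      apply zmod_ne_zero p (by exact_mod_cast h1)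
      exact_mod_cast (by omega : (n:ℤ) < p)
    have hsucc : gtilde p l (n+1) = a + legendreSym p (n:ℤ) * legendreSym p a := by
      rw [gtilde_succ p l n h1, ← ha, if_pos ⟨hapos, by omega⟩]
    rw [hsucc]
    set A : ℚ_[p] := ((a : ℤ) : ℚ_[p]) with hA'
    have hnormA : ‖A‖ = 1 := norm_int_eq_one (by
      intro hd; have := Int.le_of_dvd hapos hd; omega)
    -- congruence G ≡ A * N⁻¹
    have hcongG : ‖G - A * N⁻¹‖ < 1 := by
      have e : G - A * N⁻¹ = N⁻¹ * (N * G - A) := by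
        field_simp
      rw [e, norm_mul, norm_inv, hNn, inv_one, one_mul]
      exact hB
    have hAN : ‖A * N⁻¹‖ ≤ 1 := by
      rw [norm_mul, norm_inv, hNn, inv_one, mul_one, hnormA]
    have hpow : ‖G ^ k - (A * N⁻¹) ^ k‖ < 1 := cng_pow hA hAN hcongG k
    -- Euler for a
    have hca : ‖A ^ k - ((legendreSym p a : ℤ) : ℚ_[p])‖ < 1 := by
      have hd : (p:ℤ) ∣ a ^ k - legendreSym p a := by rw [hkp]; exact euler_dvd a
      have := (Padic.norm_intCast_lt_one_iff (p := p) (k := a ^ k - legendreSym p a)).2 hd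
      push_cast at this
      exact this
    -- Euler for n
    have hcn : ‖N ^ k - ((legendreSym p (n:ℤ) : ℤ) : ℚ_[p])‖ < 1 := by
      have hd : (p:ℤ) ∣ (n:ℤ) ^ k - legendreSym p (n:ℤ) := by rw [hkp]; exact euler_dvd _
      have := (Padic.norm_intCast_lt_one_iff (p := p) (k := (n:ℤ) ^ k - legendreSym p (n:ℤ))).2 hd
      push_cast at this
      exact this
    set L : ℚ_[p] := ((legendreSym p (n:ℤ) : ℤ) : ℚ_[p]) with hL
    have hLval : L = 1 ∨ L = -1 := by
      rcases legendreSym.eq_one_or_neg_one p hnz with h | h <;> [left; right] <;>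
        rw [hL, h] <;> norm_num
    have hLL : L * L = 1 := by rcases hLval with h | h <;> rw [h] <;> norm_num
    have hnormL : ‖L‖ = 1 := by rcases hLval with h | h <;> rw [h] <;> simp
    have hNk : ‖N ^ k‖ = 1 := by rw [norm_pow, hNn, one_pow]
    have hNk0 : N ^ k ≠ 0 := pow_ne_zero _ hN0
    -- inverse congruence
    have hinv : ‖(N ^ k)⁻¹ - L‖ < 1 := by
      have e : (N ^ k)⁻¹ - L = (N ^ k)⁻¹ * L * (L - N ^ k) := by
        have e2 : (N ^ k)⁻¹ * L * (L - N ^ k)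
            = (N ^ k)⁻¹ * (L * L) - L * ((N ^ k)⁻¹ * (N ^ k)) := by ring
        rw [e2, hLL, inv_mul_cancel₀ hNk0, mul_one, mul_one]
      rw [e, norm_mul, norm_mul, norm_inv, hNk, inv_one, one_mul, hnormL, one_mul,
        norm_sub_rev]
      exact hcn
    -- multiply the two congruences
    have hmul : ‖A ^ k * (N ^ k)⁻¹ - ((legendreSym p a : ℤ) : ℚ_[p]) * L‖ < 1 := by
      refine cng_mul ?_ ?_ hca hinv
      · exact Padic.norm_int_le_one _
      · rw [norm_inv, hNk, inv_one]
    have eAN : (A * N⁻¹) ^ k = A ^ k * (N ^ k)⁻¹ := by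
      rw [mul_pow, inv_pow]
    have hGk : ‖G ^ k - ((legendreSym p (n:ℤ) * legendreSym p a : ℤ) : ℚ_[p])‖ < 1 := by
      have : ((legendreSym p a : ℤ) : ℚ_[p]) * L
          = ((legendreSym p (n:ℤ) * legendreSym p a : ℤ) : ℚ_[p]) := by
        rw [hL]; push_cast; ring
      rw [← this]
      rw [eAN] at hpow
      exact cng_trans hpow hmul
    -- assemble
    have efin : N * G + G ^ k - ((a + legendreSym p (n:ℤ) * legendreSym p a : ℤ) : ℚ_[p])
        = (N * G - A) + (G ^ k - ((legendreSym p (n:ℤ) * legendreSym p a : ℤ) : ℚ_[p])) := by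
      rw [hA']; push_cast; ring
    rw [efin]
    exact lt_of_le_of_lt (Padic.nonarchimedean _ _) (max_lt hB hGk)

end KS
namespace KS

variable {p : ℕ} [Fact p.Prime]

lemma gobel_inv (hp4 : p % 4 = 3) (l : ℕ) (hleven : Even l) (hl : l < p) :
    ∀ n : ℕ, 1 ≤ n → n ≤ p - 1 →
      ‖Gq p ((p-1)/2) (l:ℚ) n‖ ≤ 1 ∧
        ‖(n : ℚ_[p]) * Gq p ((p-1)/2) (l:ℚ) n - ((gtilde p l n : ℤ) : ℚ_[p])‖ < 1 := by
  have hp3 : 3 ≤ p := by omega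
  intro n
  induction n with
  | zero => intro h; omega
  | succ n ih =>
    intro _ h2
    by_cases hn0 : n = 0
    · subst hn0
      have hG1 : Gq p ((p-1)/2) (l:ℚ) 1 = ((l:ℚ) : ℚ_[p]) := by
        unfold Gq; rw [gobel]
      constructor
      · rw [hG1]; push_cast
        have := Padic.norm_int_le_one (p := p) (l:ℤ)
        push_cast at this; exact this
      · have ht : gtilde p l 1 = (l:ℤ) := rfl
        rw [hG1, ht]
        push_cast
        simp
    · have hn1 : 1 ≤ n := by omega
      have IH := ih hn1 (by omega)
      have hstep := gobel_step hp4 l hleven hl n hn1 (by omega) IH.1 IH.2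
      have hrec := Gq_rec (p := p) ((p-1)/2) (l:ℚ) n hn1
      have hnorm1 : ‖((n:ℚ_[p]) + 1)‖ = 1 := by
        have : ((n:ℚ_[p]) + 1) = ((n+1 : ℕ) : ℚ_[p]) := by push_cast; ring
        rw [this]
        exact norm_natCast_eq_one (by omega) (by omega)
      -- norm of RHS is ≤ 1
      have hT : ‖((gtilde p l (n+1) : ℤ) : ℚ_[p])‖ ≤ 1 := Padic.norm_int_le_one _
      have hRHS : ‖Gq p ((p-1)/2) (l:ℚ) n * ((n:ℚ_[p]) + Gq p ((p-1)/2) (l:ℚ) n ^ ((p-1)/2 - 1))‖ ≤ 1 := by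
        have e : Gq p ((p-1)/2) (l:ℚ) n * ((n:ℚ_[p]) + Gq p ((p-1)/2) (l:ℚ) n ^ ((p-1)/2 - 1))
            = (Gq p ((p-1)/2) (l:ℚ) n * ((n:ℚ_[p]) + Gq p ((p-1)/2) (l:ℚ) n ^ ((p-1)/2 - 1))
              - ((gtilde p l (n+1) : ℤ) : ℚ_[p])) + ((gtilde p l (n+1) : ℤ) : ℚ_[p]) := by ring
        rw [e]
        refine le_trans (Padic.nonarchimedean _ _) (max_le (le_of_lt hstep) hT)
      constructor
      · have : ‖((n:ℚ_[p]) + 1) * Gq p ((p-1)/2) (l:ℚ) (n+1)‖ ≤ 1 := by rw [hrec]; exact hRHS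
        rwa [norm_mul, hnorm1, one_mul] at this
      · have e : ((n+1 : ℕ) : ℚ_[p]) * Gq p ((p-1)/2) (l:ℚ) (n+1)
            = ((n:ℚ_[p]) + 1) * Gq p ((p-1)/2) (l:ℚ) (n+1) := by push_cast; ring
        rw [e, hrec]
        exact hstep

lemma gobel_norm_le_one (hp4 : p % 4 = 3) (l : ℕ) (hleven : Even l) (hl : l < p) :
    ‖Gq p ((p-1)/2) (l:ℚ) p‖ ≤ 1 := by
  have hp3 : 3 ≤ p := by omega
  have hinv := gobel_inv hp4 l hleven hl (p-1) (by omega) le_rfl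
  have hstep := gobel_step hp4 l hleven hl (p-1) (by omega) le_rfl hinv.1 hinv.2
  have hTp : gtilde p l ((p-1)+1) = 0 := by
    have : (p-1)+1 = p := by omega
    rw [this]
    exact gtilde_p p hp4 l hleven hl
  rw [hTp] at hstep
  have hRHS : ‖Gq p ((p-1)/2) (l:ℚ) (p-1) * (((p-1:ℕ):ℚ_[p]) + Gq p ((p-1)/2) (l:ℚ) (p-1) ^ ((p-1)/2 - 1))‖ < 1 := by
    simpa using hstep
  have hrec := Gq_rec (p := p) ((p-1)/2) (l:ℚ) (p-1) (by omega)
  have hcast : (((p-1:ℕ)):ℚ_[p]) + 1 = (p : ℚ_[p]) := by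
    have : ((p-1:ℕ) : ℚ_[p]) = (p : ℚ_[p]) - 1 := by
      push_cast [Nat.cast_sub (by omega : 1 ≤ p)]; ring
    rw [this]; ring
  have hidx : (p-1)+1 = p := by omega
  rw [hcast, hidx] at hrec
  -- ‖p * G p‖ < 1 hence ≤ p⁻¹
  have hlt : ‖(p:ℚ_[p]) * Gq p ((p-1)/2) (l:ℚ) p‖ < 1 := by rw [hrec]; exact hRHS
  have hle : ‖(p:ℚ_[p]) * Gq p ((p-1)/2) (l:ℚ) p‖ ≤ ((p:ℝ))⁻¹ := by
    have := (Padic.norm_le_pow_iff_norm_lt_pow_add_one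
      ((p:ℚ_[p]) * Gq p ((p-1)/2) (l:ℚ) p) (-1)).2
    simp only [neg_add_cancel, zpow_zero, zpow_neg_one] at this
    exact this hlt
  have hnp : ‖(p:ℚ_[p])‖ = ((p:ℝ))⁻¹ := Padic.norm_p
  have hppos : (0:ℝ) < p := by positivity
  have := hle
  rw [norm_mul, hnp] at this
  calc ‖Gq p ((p-1)/2) (l:ℚ) p‖
      = (p:ℝ) * ((p:ℝ)⁻¹ * ‖Gq p ((p-1)/2) (l:ℚ) p‖) := by
        field_simp
    _ ≤ (p:ℝ) * (p:ℝ)⁻¹ := by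
        refine mul_le_mul_of_nonneg_left ?_ (le_of_lt hppos)
        exact this
    _ = 1 := by field_simp

lemma inZp_of_norm_le_one {x : ℚ} (h : ‖(x : ℚ_[p])‖ ≤ 1) : inZp p x := by
  intro hd
  have hden0 : x.den ≠ 0 := x.den_nz
  have hnum : ¬ (p:ℤ) ∣ x.num := by
    intro hn
    have h1 : p ∣ x.num.natAbs := by
      have := Int.natAbs_dvd_natAbs.2 hn
      simpa using this
    have hc := x.reduced
    have : p ∣ Nat.gcd x.num.natAbs x.den := Nat.dvd_gcd h1 hd
    rw [hc] at this
    exact (Fact.out : p.Prime).one_lt.ne' (Nat.dvd_one.1 this)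
  have h1 : ‖((x.num : ℚ_[p]))‖ = 1 := norm_int_eq_one hnum
  have hden : ‖((x.den : ℚ_[p]))‖ < 1 := by
    have := (Padic.norm_intCast_lt_one_iff (p := p) (k := (x.den : ℤ))).2 (by exact_mod_cast hd)
    push_cast at this
    exact this
  have hxd : (x : ℚ_[p]) * (x.den : ℚ_[p]) = (x.num : ℚ_[p]) := by
    have hq : x * (x.den : ℚ) = (x.num : ℚ) := by
      rw [mul_comm, Rat.den_mul_eq_num]
    have := congrArg (fun q : ℚ => (q : ℚ_[p])) hq
    push_cast at this
    exact this
  have : (1:ℝ) = ‖(x : ℚ_[p])‖ * ‖((x.den : ℚ_[p]))‖ := by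
    rw [← norm_mul, hxd, h1]
  have hle : ‖(x : ℚ_[p])‖ * ‖((x.den : ℚ_[p]))‖ ≤ ‖((x.den : ℚ_[p]))‖ := by
    calc ‖(x : ℚ_[p])‖ * ‖((x.den : ℚ_[p]))‖ ≤ 1 * ‖((x.den : ℚ_[p]))‖ :=
          mul_le_mul_of_nonneg_right h (norm_nonneg _)
      _ = ‖((x.den : ℚ_[p]))‖ := one_mul _
  linarith

end KS

theorem stmt3 (p : ℕ) [Fact p.Prime] (hp4 : p % 4 = 3) (l : ℕ) (hleven : Even l)
    (hl : l < p) :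
    (∀ n : ℕ, 1 ≤ n → n ≤ p → gtilde p l n ≤ (p : ℤ) - (n : ℤ)) ∧
    gtilde p l p = 0 ∧
    inZp p (gobel ((p - 1) / 2) (l : ℚ) p) := by
  refine ⟨KS.gtilde_le p hp4 l hleven hl, KS.gtilde_p p hp4 l hleven hl, ?_⟩
  exact KS.inZp_of_norm_le_one (KS.gobel_norm_le_one hp4 l hleven hl)
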